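/- Let w : Fin 2 → ℝ with each w i equal to 1 or −1, let Q be the diagonal quadratic form on Fin 2 → ℝ with weights w, let A = CliffordAlgebra Q, and let conj : A → A denote Clifford conjugation (reversal composed with grade involution). Let a, b, c ∈ A and set d := a^2 + b·conj b + a·(b + conj b). If d is a unit of A, then x := d⁻¹·(a·c + c·conj b) (using the inverse of the unit d) satisfies the Sylvester equation a·x + x·b = c. -/

import Mathlib

/-- Clifford conjugation: reversal composed with grade involution. -/
noncomputable def cliffordConj {n : ℕ} (w : Fin n → ℝ) :
    CliffordAlgebra (QuadraticMap.weightedSumSquares ℝ w) →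
      CliffordAlgebra (QuadraticMap.weightedSumSquares ℝ w) :=
  fun a => CliffordAlgebra.reverse (CliffordAlgebra.involute a)

open CliffordAlgebra
open scoped Quaternion

noncomputable def quadIso (w : Fin 2 → ℝ) :
    (QuadraticMap.weightedSumSquares ℝ w).IsometryEquiv
      (CliffordAlgebraQuaternion.Q (w 0) (w 1)) where
  toLinearEquiv := LinearEquiv.finTwoArrow ℝ ℝ
  map_app' v := by
    simp [QuadraticMap.weightedSumSquares_apply, Fin.sum_univ_two, LinearEquiv.finTwoArrow,
      smul_eq_mul]

noncomputable def toQuat (w : Fin 2 → ℝ) :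
    CliffordAlgebra (QuadraticMap.weightedSumSquares ℝ w) ≃ₐ[ℝ] ℍ[ℝ, w 0, w 1] :=
  (CliffordAlgebra.equivOfIsometry (quadIso w)).trans CliffordAlgebraQuaternion.equiv

lemma toQuat_star (w : Fin 2 → ℝ) (x : CliffordAlgebra (QuadraticMap.weightedSumSquares ℝ w)) :
    toQuat w (star x) = star (toQuat w x) := by
  induction x using CliffordAlgebra.induction with
  | algebraMap r => simp [CliffordAlgebra.star_def]
  | ι v =>
      rw [CliffordAlgebra.star_ι, map_neg]
      rw [show (toQuat w) (ι _ v) = CliffordAlgebraQuaternion.toQuaternion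
        (ι _ ((quadIso w) v)) from by
          simp [toQuat, CliffordAlgebraQuaternion.equiv, CliffordAlgebra.equivOfIsometry_apply]]
      rw [CliffordAlgebraQuaternion.toQuaternion_ι]
      rw [QuaternionAlgebra.star_mk]
      simp
  | mul x y hx hy => rw [star_mul, map_mul, map_mul, hx, hy, star_mul]
  | add x y hx hy => rw [star_add, map_add, map_add, hx, hy, star_add]

lemma star_scalars (w : Fin 2 → ℝ)
    (b : CliffordAlgebra (QuadraticMap.weightedSumSquares ℝ w)) :
    (∃ r : ℝ, b + star b = algebraMap ℝ _ r) ∧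
      (∃ t : ℝ, b * star b = algebraMap ℝ _ t ∧ star b * b = algebraMap ℝ _ t) := by
  set q := toQuat w b with hq
  refine ⟨⟨2 * q.re, (toQuat w).injective ?_⟩, (q * star q).re, (toQuat w).injective ?_,
    (toQuat w).injective ?_⟩
  · rw [map_add, toQuat_star, AlgEquiv.commutes, ← hq, QuaternionAlgebra.self_add_star',
      QuaternionAlgebra.coe_algebraMap, zero_mul, add_zero]
  · rw [map_mul, toQuat_star, AlgEquiv.commutes, ← hq, QuaternionAlgebra.coe_algebraMap,
      ← QuaternionAlgebra.mul_star_eq_coe]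
  · rw [map_mul, toQuat_star, AlgEquiv.commutes, ← hq, QuaternionAlgebra.coe_algebraMap,
      star_comm_self', ← QuaternionAlgebra.mul_star_eq_coe]

theorem clifford2_sylvester_left_solution (w : Fin 2 → ℝ)
    (hw : ∀ i, w i = 1 ∨ w i = -1)
    (a b c : CliffordAlgebra (QuadraticMap.weightedSumSquares ℝ w))
    (hd : IsUnit (a ^ 2 + b * cliffordConj w b + a * (b + cliffordConj w b))) :
    a * (↑hd.unit⁻¹ * (a * c + c * cliffordConj w b)) +
      (↑hd.unit⁻¹ * (a * c + c * cliffordConj w b)) * b = c := by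
  have hconj : ∀ x, cliffordConj w x = star x := fun x => (CliffordAlgebra.star_def x).symm
  obtain ⟨⟨r, hr⟩, t, ht1, ht2⟩ := star_scalars w b
  have hu : (hd.unit : CliffordAlgebra (QuadraticMap.weightedSumSquares ℝ w))
      = a ^ 2 + algebraMap ℝ _ t + a * algebraMap ℝ _ r := by
    rw [IsUnit.unit_spec, hconj, ht1, hr]
  simp only [hconj]
  have hcomm : Commute a (hd.unit : CliffordAlgebra (QuadraticMap.weightedSumSquares ℝ w)) := by
    rw [hu]
    exact (((Commute.refl a).pow_right 2).add_right
      (Algebra.commute_algebraMap_right t a)).add_right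
      ((Commute.refl a).mul_right (Algebra.commute_algebraMap_right r a))
  have hinv : Commute a ((hd.unit⁻¹ : _ˣ) : CliffordAlgebra _) := hcomm.units_inv_right
  have key : a * (a * c + c * star b) + (a * c + c * star b) * b = ↑hd.unit * c := by
    have hcs : c * star b * b = algebraMap ℝ _ t * c := by
      rw [mul_assoc, ht2, Algebra.commutes]
    have hacs : a * (c * star b) + a * c * b = a * algebraMap ℝ _ r * c := by
      rw [mul_assoc a c b, ← mul_add, ← mul_add, add_comm (star b) b, hr, mul_assoc a,
        Algebra.commutes]
    rw [hu, mul_add, add_mul, add_mul, add_mul, hcs, ← mul_assoc a a c, ← pow_two, ← hacs]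
    abel
  calc a * (↑hd.unit⁻¹ * (a * c + c * star b)) + ↑hd.unit⁻¹ * (a * c + c * star b) * b
      = ↑hd.unit⁻¹ * (a * (a * c + c * star b) + (a * c + c * star b) * b) := by
        rw [← mul_assoc a, hinv.eq, mul_assoc, mul_assoc, ← mul_add]
    _ = ↑hd.unit⁻¹ * (↑hd.unit * c) := by rw [key]
    _ = c := by rw [← mul_assoc, Units.inv_mul, one_mul]
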